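/- Given an adjunction T ⊣ S between M and K, there is a functor J-inj_K → J-inj_M lifting S: if (f,ψ) is an arrow f of K equipped with a coherent lifting function against the category TJ (the image of J under the lifted adjunction on arrow categories), then (Sf, ψ^♯), where ψ^♯(j,u,v) is the adjunct S(ψ(Tj, ν∘Tu, ν∘Tv))∘ι of ψ's lifts, is an arrow of M with a coherent lifting function against J; moreover squares preserving lifting functions are sent to squares preserving lifting functions. -/

import Mathlib

open CategoryTheory

universe v u v' u'

/-- A coherent lifting function for `g` against a category `J` of arrows over the
arrow category: for each object `j` of `𝒥` and each commutative square from
`J.obj j` to `g`, a chosen diagonal filler, natural with respect to the morphisms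
of `𝒥`. -/
def IsLiftingFunction {C : Type u} [Category.{v} C] {𝒥 : Type u'} [Category.{v'} 𝒥]
    (J : 𝒥 ⥤ Arrow C) {X Y : C} (g : X ⟶ Y)
    (φ : ∀ (j : 𝒥) (u : (J.obj j).left ⟶ X) (v : (J.obj j).right ⟶ Y),
      (J.obj j).hom ≫ v = u ≫ g → ((J.obj j).right ⟶ X)) : Prop :=
  (∀ (j : 𝒥) u v h, (J.obj j).hom ≫ φ j u v h = u) ∧
  (∀ (j : 𝒥) u v h, φ j u v h ≫ g = v) ∧
  (∀ {j' j : 𝒥} (a : j' ⟶ j) u v h h',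
    φ j' ((J.map a).left ≫ u) ((J.map a).right ≫ v) h' = (J.map a).right ≫ φ j u v h)

variable {M : Type u} [Category.{v} M] {K : Type u} [Category.{v} K]
variable {𝒥 : Type u'} [Category.{v'} 𝒥]

/-- The adjunct lifting function `ψ^♯`: given an adjunction `T ⊣ S` and a lifting
function `ψ` for `f` against `TJ`, the lifting function for `S f` against `J` whose
lifts are the adjuncts of the lifts of `ψ`. -/
def sharp {T : M ⥤ K} {S : K ⥤ M} (adj : T ⊣ S) (J : 𝒥 ⥤ Arrow M)
    {X Y : K} (f : X ⟶ Y)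
    (ψ : ∀ (j : 𝒥) (u : ((J ⋙ T.mapArrow).obj j).left ⟶ X)
      (v : ((J ⋙ T.mapArrow).obj j).right ⟶ Y),
      ((J ⋙ T.mapArrow).obj j).hom ≫ v = u ≫ f → (((J ⋙ T.mapArrow).obj j).right ⟶ X)) :
    ∀ (j : 𝒥) (u : (J.obj j).left ⟶ S.obj X) (v : (J.obj j).right ⟶ S.obj Y),
      (J.obj j).hom ≫ v = u ≫ S.map f → ((J.obj j).right ⟶ S.obj X) :=
  fun j u v h =>
    adj.unit.app ((J.obj j).right) ≫
      S.map (ψ j (T.map u ≫ adj.counit.app X) (T.map v ≫ adj.counit.app Y)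
        (by
          show T.map (J.obj j).hom ≫ (T.map v ≫ adj.counit.app Y) =
            (T.map u ≫ adj.counit.app X) ≫ f
          rw [← Category.assoc, ← T.map_comp, h, T.map_comp, Category.assoc,
            Category.assoc]
          congr 1
          simpa using adj.counit.naturality f))

private lemma phiCongr {C : Type u} [Category.{v} C] {𝒥 : Type u'} [Category.{v'} 𝒥]
    (J : 𝒥 ⥤ Arrow C) {X Y : C} (g : X ⟶ Y)
    (φ : ∀ (j : 𝒥) (u : (J.obj j).left ⟶ X) (v : (J.obj j).right ⟶ Y),
      (J.obj j).hom ≫ v = u ≫ g → ((J.obj j).right ⟶ X))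
    (j : 𝒥) {u u' : (J.obj j).left ⟶ X} {v v' : (J.obj j).right ⟶ Y}
    (hu : u = u') (hv : v = v') (h : (J.obj j).hom ≫ v = u ≫ g)
    (h' : (J.obj j).hom ≫ v' = u' ≫ g) :
    φ j u v h = φ j u' v' h' := by subst hu; subst hv; rfl

private lemma sharp_pf {T : M ⥤ K} {S : K ⥤ M} (adj : T ⊣ S) (J : 𝒥 ⥤ Arrow M)
    {X Y : K} (f : X ⟶ Y) (j : 𝒥) (u : (J.obj j).left ⟶ S.obj X)
    (v : (J.obj j).right ⟶ S.obj Y) (h : (J.obj j).hom ≫ v = u ≫ S.map f) :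
    T.map (J.obj j).hom ≫ (T.map v ≫ adj.counit.app Y) =
      (T.map u ≫ adj.counit.app X) ≫ f := by
  rw [← Category.assoc, ← T.map_comp, h, T.map_comp, Category.assoc, Category.assoc]
  simp

private lemma unit_nat' {T : M ⥤ K} {S : K ⥤ M} (adj : T ⊣ S) {A B : M} (f : A ⟶ B)
    {Z : M} (g : S.obj (T.obj B) ⟶ Z) :
    f ≫ adj.unit.app B ≫ g = adj.unit.app A ≫ S.map (T.map f) ≫ g := by simp

/-- Given an adjunction `T ⊣ S`, a lifting function for `f` against `TJ` transposes to
the lifting function `ψ^♯` for `S f` against `J`; moreover squares preserving lifting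
functions are sent to squares preserving lifting functions. -/
theorem stmt12 {T : M ⥤ K} {S : K ⥤ M} (adj : T ⊣ S) (J : 𝒥 ⥤ Arrow M)
    {X Y : K} (f : X ⟶ Y)
    (ψ : ∀ (j : 𝒥) (u : ((J ⋙ T.mapArrow).obj j).left ⟶ X)
      (v : ((J ⋙ T.mapArrow).obj j).right ⟶ Y),
      ((J ⋙ T.mapArrow).obj j).hom ≫ v = u ≫ f → (((J ⋙ T.mapArrow).obj j).right ⟶ X))
    (hψ : IsLiftingFunction (J ⋙ T.mapArrow) f ψ) :
    IsLiftingFunction J (S.map f) (sharp adj J f ψ) ∧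
    (∀ {X' Y' : K} (f' : X' ⟶ Y')
      (ψ' : ∀ (j : 𝒥) (u : ((J ⋙ T.mapArrow).obj j).left ⟶ X')
        (v : ((J ⋙ T.mapArrow).obj j).right ⟶ Y'),
        ((J ⋙ T.mapArrow).obj j).hom ≫ v = u ≫ f' →
          (((J ⋙ T.mapArrow).obj j).right ⟶ X')),
      IsLiftingFunction (J ⋙ T.mapArrow) f' ψ' →
      ∀ (a : X ⟶ X') (b : Y ⟶ Y'), f ≫ b = a ≫ f' →
      (∀ (j : 𝒥) u v h h', ψ j u v h ≫ a = ψ' j (u ≫ a) (v ≫ b) h') →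
      ∀ (j : 𝒥) u v h h',
        sharp adj J f ψ j u v h ≫ S.map a =
          sharp adj J f' ψ' j (u ≫ S.map a) (v ≫ S.map b) h') := by
  obtain ⟨h1, h2, h3⟩ := hψ
  constructor
  · refine ⟨fun j u v h => ?_, fun j u v h => ?_, fun {j' j} a u v h h' => ?_⟩
    · have e1 : T.map (J.obj j).hom ≫
          ψ j (T.map u ≫ adj.counit.app X) (T.map v ≫ adj.counit.app Y)
            (sharp_pf adj J f j u v h) = T.map u ≫ adj.counit.app X :=
        h1 j _ _ _
      dsimp only [sharp, Functor.mapArrow, Functor.comp_obj]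
      rw [← Category.assoc]
      erw [← adj.unit_naturality]
      erw [Category.assoc, ← S.map_comp, e1, S.map_comp, adj.unit_naturality_assoc]
      simp
    · have e2 : ψ j (T.map u ≫ adj.counit.app X) (T.map v ≫ adj.counit.app Y)
          (sharp_pf adj J f j u v h) ≫ f = T.map v ≫ adj.counit.app Y :=
        h2 j _ _ _
      dsimp only [sharp]
      erw [Category.assoc, ← S.map_comp, e2, S.map_comp, adj.unit_naturality_assoc]
      simp
    · have p : T.map (J.obj j).hom ≫ (T.map v ≫ adj.counit.app Y) =
          (T.map u ≫ adj.counit.app X) ≫ f := sharp_pf adj J f j u v h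
      have p' : T.map (J.obj j').hom ≫
          (T.map (J.map a).right ≫ (T.map v ≫ adj.counit.app Y)) =
          (T.map (J.map a).left ≫ (T.map u ≫ adj.counit.app X)) ≫ f := by
        rw [← Category.assoc, ← T.map_comp, ← Arrow.w, T.map_comp, Category.assoc, p]
        simp
      have step : ψ j' (T.map ((J.map a).left ≫ u) ≫ adj.counit.app X)
            (T.map ((J.map a).right ≫ v) ≫ adj.counit.app Y)
            (sharp_pf adj J f j' ((J.map a).left ≫ u) ((J.map a).right ≫ v) h') =
          T.map (J.map a).right ≫
            ψ j (T.map u ≫ adj.counit.app X) (T.map v ≫ adj.counit.app Y) p :=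
        (phiCongr (J ⋙ T.mapArrow) f ψ j' (by simp; exact Category.assoc _ _ _) (by simp; exact Category.assoc _ _ _) _ p').trans
          (h3 a _ _ p p')
      dsimp only [sharp]
      erw [step, S.map_comp, adj.unit_naturality_assoc]
  · intro X' Y' f' ψ' hψ' a b hab hsq j u v h h'
    have p : T.map (J.obj j).hom ≫ (T.map v ≫ adj.counit.app Y) =
        (T.map u ≫ adj.counit.app X) ≫ f := sharp_pf adj J f j u v h
    have p3 : T.map (J.obj j).hom ≫ ((T.map v ≫ adj.counit.app Y) ≫ b) =
        ((T.map u ≫ adj.counit.app X) ≫ a) ≫ f' := by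
      rw [← Category.assoc, p, Category.assoc, hab, ← Category.assoc]
    have step : ψ j (T.map u ≫ adj.counit.app X) (T.map v ≫ adj.counit.app Y)
          (sharp_pf adj J f j u v h) ≫ a =
        ψ' j (T.map (u ≫ S.map a) ≫ adj.counit.app X')
          (T.map (v ≫ S.map b) ≫ adj.counit.app Y')
          (sharp_pf adj J f' j (u ≫ S.map a) (v ≫ S.map b) h') :=
      (hsq j _ _ _ p3).trans
        (phiCongr (J ⋙ T.mapArrow) f' ψ' j (by simp; erw [Category.assoc, Category.assoc, adj.counit_naturality]) (by simp; erw [Category.assoc, Category.assoc, adj.counit_naturality]) _ _)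
    dsimp only [sharp]
    erw [Category.assoc, ← S.map_comp, step]
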